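/- Feasibility of the optimal policy in ConvexConPlanner (Lemma C.1): Let D be a finite index set of resources and g : ℝ^D → ℝ any function. Fix a true transition function p★ and true consumptions c★_i : S × A → [0,1] for i ∈ D; fix estimates p̂, (ĉ_i)_{i∈D} and a bonus b : S × A → ℝ with b ≥ 0. Let π★ be a policy such that g( (V_{c★_i}^{π★,p★}(s0,1))_{i∈D} ) ≤ 0, and suppose the bonus is valid with respect to π★ for each consumption objective, i.e., for all s, a, h and all i ∈ D: | (ĉ_i(s,a) − c★_i(s,a)) + Σ_{s'} (p̂(s'|s,a) − p★(s'|s,a)) · V_{c★_i}^{π★,p★}(s', h+1) | ≤ b(s,a). Then there exist consumption functions c_i : S × A → ℝ with |c_i(s,a) − ĉ_i(s,a)| ≤ b(s,a) for all s, a, i, such that V_{c_i}^{π★,p̂}(s0,1) = V_{c★_i}^{π★,p★}(s0,1) for every i ∈ D; in particular g( (V_{c_i}^{π★,p̂}(s0,1))_{i∈D} ) ≤ 0, so π★ is a feasible solution of the ConvexConPlanner program. -/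

import Mathlib

open Finset

section MDPDefs

variable {S A : Type*} [Fintype S] [Fintype A]

/-- Expected cumulative sum of a step-dependent objective `φ h s a`, defined by
backward recursion on the number `n` of remaining steps, where `h` is the current stage. -/
noncomputable def EValAux (π : ℕ → S → PMF A) (p : S → A → PMF S)
    (φ : ℕ → S → A → ℝ) : ℕ → ℕ → S → ℝ
  | 0, _, _ => 0
  | n + 1, h, s =>
      ∑ a : A, (π h s a).toReal *
        (φ h s a + ∑ s' : S, (p s a s').toReal * EValAux π p φ n (h + 1) s')

/-- `EVal H π p φ h s = E^{π,p}[ Σ_{h'=h}^H φ(h', s_{h'}, a_{h'}) | s_h = s ]`. -/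
noncomputable def EVal (H : ℕ) (π : ℕ → S → PMF A) (p : S → A → PMF S)
    (φ : ℕ → S → A → ℝ) (h : ℕ) (s : S) : ℝ :=
  EValAux π p φ (H + 1 - h) h s

/-- Value function `V_m^{π,p}(s,h)` of the objective `m` for horizon `H`. -/
noncomputable def Vf (H : ℕ) (π : ℕ → S → PMF A) (p : S → A → PMF S)
    (m : S → A → ℝ) (h : ℕ) (s : S) : ℝ :=
  EVal H π p (fun _ s a => m s a) h s

/-- Q-function `Q_m^{π,p}(s,a,h)` of the objective `m` for horizon `H`. -/
noncomputable def Qf (H : ℕ) (π : ℕ → S → PMF A) (p : S → A → PMF S)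
    (m : S → A → ℝ) (h : ℕ) (s : S) (a : A) : ℝ :=
  m s a + ∑ s' : S, (p s a s').toReal * Vf H π p m (h + 1) s'

/-- Bellman error of the model `(p, m)` under policy `π`, with respect to the
true transition function `pstar` and true objective `mstar`. -/
noncomputable def Bell (H : ℕ) (π : ℕ → S → PMF A) (p : S → A → PMF S) (m : S → A → ℝ)
    (pstar : S → A → PMF S) (mstar : S → A → ℝ) (h : ℕ) (s : S) (a : A) : ℝ :=
  Qf H π p m h s a - (mstar s a + ∑ s' : S, (pstar s a s').toReal * Vf H π p m (h + 1) s')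

end MDPDefs

section Cmp
variable {S A : Type*} [Fintype S] [Fintype A]

/-- Comparison lemma, pivot is the value function of the LEFT model. -/
lemma evalAux_le_left (H : ℕ) (π : ℕ → S → PMF A) (p1 p2 : S → A → PMF S)
    (m1 m2 : S → A → ℝ)
    (hkey : ∀ s a h, 1 ≤ h → h ≤ H →
      m1 s a + ∑ s' : S, (p1 s a s').toReal * Vf H π p1 m1 (h+1) s'
        ≤ m2 s a + ∑ s' : S, (p2 s a s').toReal * Vf H π p1 m1 (h+1) s') :
    ∀ n h s, 1 ≤ h → h + n = H + 1 →
      EValAux π p1 (fun _ => m1) n h s ≤ EValAux π p2 (fun _ => m2) n h s := by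
  intro n
  induction n with
  | zero => intro h s _ _; simp [EValAux]
  | succ n ih =>
    intro h s h1 hsum
    have hhH : h ≤ H := by omega
    simp only [EValAux]
    apply Finset.sum_le_sum
    intro a _
    apply mul_le_mul_of_nonneg_left _ ENNReal.toReal_nonneg
    have hV : ∀ s', EValAux π p1 (fun _ => m1) n (h+1) s' = Vf H π p1 m1 (h+1) s' := by
      intro s'
      have hn : H + 1 - (h+1) = n := by omega
      simp [Vf, EVal, hn]
    calc m1 s a + ∑ s' : S, (p1 s a s').toReal * EValAux π p1 (fun _ => m1) n (h+1) s'
        = m1 s a + ∑ s' : S, (p1 s a s').toReal * Vf H π p1 m1 (h+1) s' := by simp_rw [hV]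
      _ ≤ m2 s a + ∑ s' : S, (p2 s a s').toReal * Vf H π p1 m1 (h+1) s' := hkey s a h h1 hhH
      _ ≤ m2 s a + ∑ s' : S, (p2 s a s').toReal * EValAux π p2 (fun _ => m2) n (h+1) s' := by
          gcongr with s' _
          rw [← hV s']; exact ih (h+1) s' (by omega) (by omega)

/-- Comparison lemma, pivot is the value function of the RIGHT model. -/
lemma evalAux_le_right (H : ℕ) (π : ℕ → S → PMF A) (p1 p2 : S → A → PMF S)
    (m1 m2 : S → A → ℝ)
    (hkey : ∀ s a h, 1 ≤ h → h ≤ H →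
      m1 s a + ∑ s' : S, (p1 s a s').toReal * Vf H π p2 m2 (h+1) s'
        ≤ m2 s a + ∑ s' : S, (p2 s a s').toReal * Vf H π p2 m2 (h+1) s') :
    ∀ n h s, 1 ≤ h → h + n = H + 1 →
      EValAux π p1 (fun _ => m1) n h s ≤ EValAux π p2 (fun _ => m2) n h s := by
  intro n
  induction n with
  | zero => intro h s _ _; simp [EValAux]
  | succ n ih =>
    intro h s h1 hsum
    have hhH : h ≤ H := by omega
    simp only [EValAux]
    apply Finset.sum_le_sum
    intro a _
    apply mul_le_mul_of_nonneg_left _ ENNReal.toReal_nonneg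
    have hV : ∀ s', EValAux π p2 (fun _ => m2) n (h+1) s' = Vf H π p2 m2 (h+1) s' := by
      intro s'
      have hn : H + 1 - (h+1) = n := by omega
      simp [Vf, EVal, hn]
    calc m1 s a + ∑ s' : S, (p1 s a s').toReal * EValAux π p1 (fun _ => m1) n (h+1) s'
        ≤ m1 s a + ∑ s' : S, (p1 s a s').toReal * Vf H π p2 m2 (h+1) s' := by
          gcongr with s' _
          rw [← hV s']; exact ih (h+1) s' (by omega) (by omega)
      _ ≤ m2 s a + ∑ s' : S, (p2 s a s').toReal * Vf H π p2 m2 (h+1) s' := hkey s a h h1 hhH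
      _ = m2 s a + ∑ s' : S, (p2 s a s').toReal * EValAux π p2 (fun _ => m2) n (h+1) s' := by
          simp_rw [hV]

lemma evalAux_continuous (π : ℕ → S → PMF A) (p : S → A → PMF S)
    (chat b : S → A → ℝ) (n : ℕ) :
    ∀ h s, Continuous (fun t : ℝ =>
      EValAux π p (fun _ s a => chat s a + t * b s a) n h s) := by
  induction n with
  | zero => intro h s; simp only [EValAux]; exact continuous_const
  | succ n ih =>
    intro h s
    simp only [EValAux]
    apply continuous_finset_sum
    intro a _
    refine Continuous.mul continuous_const (Continuous.add ?_ ?_)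
    · exact continuous_const.add (continuous_id.mul continuous_const)
    · exact continuous_finset_sum _ fun s' _ => continuous_const.mul (ih (h+1) s')

end Cmp


/-- **Feasibility of the optimal policy in ConvexConPlanner (Lemma C.1).**
If the bonus is valid with respect to `π★` for each consumption objective, then
there exist consumptions within the bonus band around the empirical estimates under
which `π★` attains, in the estimated model, exactly its true consumption values;
in particular `π★` is feasible for the ConvexConPlanner program. -/
theorem feasibility_optimal_policy_convex
    {S A D : Type*} [Fintype S] [Fintype A] [Fintype D] [Nonempty S] [Nonempty A]
    (H : ℕ) (s0 : S) (g : (D → ℝ) → ℝ)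
    (pstar phat : S → A → PMF S)
    (cstar chat : D → S → A → ℝ) (b : S → A → ℝ)
    (hcstar : ∀ i s a, cstar i s a ∈ Set.Icc (0 : ℝ) 1)
    (hb : ∀ s a, 0 ≤ b s a)
    (πstar : ℕ → S → PMF A)
    (hgstar : g (fun i => Vf H πstar pstar (cstar i) 1 s0) ≤ 0)
    (hvalid : ∀ i : D, ∀ s a h, 1 ≤ h → h ≤ H →
      |(chat i s a - cstar i s a)
          + ∑ s' : S, ((phat s a s').toReal - (pstar s a s').toReal) *
              Vf H πstar pstar (cstar i) (h + 1) s'|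
        ≤ b s a) :
    ∃ c : D → S → A → ℝ,
      (∀ i s a, |c i s a - chat i s a| ≤ b s a)
      ∧ (∀ i : D, Vf H πstar phat (c i) 1 s0 = Vf H πstar pstar (cstar i) 1 s0)
      ∧ g (fun i => Vf H πstar phat (c i) 1 s0) ≤ 0 := by
  classical
  have key : ∀ i : D, ∃ t : ℝ, t ∈ Set.Icc (-1 : ℝ) 1 ∧
      Vf H πstar phat (fun s a => chat i s a + t * b s a) 1 s0
        = Vf H πstar pstar (cstar i) 1 s0 := by
    intro i
    set F : ℝ → ℝ := fun t =>
      EValAux πstar phat (fun _ s a => chat i s a + t * b s a) H 1 s0 with hF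
    have hFcont : Continuous F := evalAux_continuous πstar phat (chat i) b H 1 s0
    have hsplit : ∀ s a h,
        ∑ s' : S, ((phat s a s').toReal - (pstar s a s').toReal) *
            Vf H πstar pstar (cstar i) (h + 1) s'
          = (∑ s' : S, (phat s a s').toReal * Vf H πstar pstar (cstar i) (h + 1) s')
            - ∑ s' : S, (pstar s a s').toReal * Vf H πstar pstar (cstar i) (h + 1) s' := by
      intro s a h
      simp [sub_mul, Finset.sum_sub_distrib]
    have hlow : F (-1) ≤ Vf H πstar pstar (cstar i) 1 s0 := by
      refine evalAux_le_right H πstar phat pstar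
        (fun s a => chat i s a + (-1) * b s a) (cstar i) ?_ H 1 s0 le_rfl (by omega)
      intro s a h h1 hH
      have hv := abs_le.mp (hvalid i s a h h1 hH)
      rw [hsplit s a h] at hv
      have := hv.2
      linarith
    have hhigh : Vf H πstar pstar (cstar i) 1 s0 ≤ F 1 := by
      refine evalAux_le_left H πstar pstar phat
        (cstar i) (fun s a => chat i s a + 1 * b s a) ?_ H 1 s0 le_rfl (by omega)
      intro s a h h1 hH
      have hv := abs_le.mp (hvalid i s a h h1 hH)
      rw [hsplit s a h] at hv
      have := hv.1
      linarith
    have hmem : Vf H πstar pstar (cstar i) 1 s0 ∈ Set.Icc (F (-1)) (F 1) :=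
      ⟨hlow, hhigh⟩
    have := intermediate_value_Icc (by norm_num : (-1 : ℝ) ≤ 1) hFcont.continuousOn hmem
    obtain ⟨t, htmem, hFt⟩ := this
    exact ⟨t, htmem, hFt⟩
  choose t ht hVt using key
  refine ⟨fun i s a => chat i s a + t i * b s a, ?_, hVt, ?_⟩
  · intro i s a
    have h1 : |t i| ≤ 1 := abs_le.mpr ⟨(ht i).1, (ht i).2⟩
    have : chat i s a + t i * b s a - chat i s a = t i * b s a := by ring
    rw [this, abs_mul, abs_of_nonneg (hb s a)]
    calc |t i| * b s a ≤ 1 * b s a := by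
          exact mul_le_mul_of_nonneg_right h1 (hb s a)
      _ = b s a := one_mul _
  · have : (fun i => Vf H πstar phat (fun s a => chat i s a + t i * b s a) 1 s0)
        = fun i => Vf H πstar pstar (cstar i) 1 s0 := funext hVt
    rw [this]
    exact hgstar
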